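/- Let λ > 0, L > 0, d ≥ 1, and x₁,…,x_T ∈ ℝ^d with ‖x_t‖₂² ≤ L for all t. With A_t = λI + Σ_{i<t} x_i x_iᵀ, we have Σ_{t=1}^T min(1, ‖x_t‖²_{A_t⁻¹}) ≤ 2·log(det A_{T+1} / det(λI)) ≤ 2 d log(1 + T L /(d λ)). -/

import Mathlib

open Matrix

lemma aux_min_le_two_log {u : ℝ} (hu : 0 ≤ u) : min 1 u ≤ 2 * Real.log (1 + u) := by
  have h1 : (0:ℝ) < 1 + u := by linarith
  have h2 : Real.log (1/(1+u)) ≤ 1/(1+u) - 1 := Real.log_le_sub_one_of_pos (by positivity)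
  rw [Real.log_div one_ne_zero (ne_of_gt h1), Real.log_one] at h2
  have hlog : u/(1+u) ≤ Real.log (1+u) := by
    have h3 : 1/(1+u) - 1 = -(u/(1+u)) := by field_simp; ring
    linarith [h2, h3 ▸ h2]
  have hlog2 : u ≤ Real.log (1+u) * (1+u) := (div_le_iff₀ h1).mp hlog
  have hln : 0 ≤ Real.log (1+u) := Real.log_nonneg (by linarith)
  rcases le_total u 1 with h | h
  · rw [min_eq_right h]
    nlinarith [hlog2, hln, h, h1]
  · rw [min_eq_left h]
    nlinarith [hlog2, h, h1]

lemma aux_vecMulVec_posSemidef {d : ℕ} (v : Fin d → ℝ) :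
    (vecMulVec v v).PosSemidef := by
  have h := Matrix.posSemidef_self_mul_conjTranspose (Matrix.replicateCol Unit v)
  rw [vecMulVec_eq Unit]
  have he : Matrix.replicateRow Unit v = (Matrix.replicateCol Unit v)ᴴ := by
    ext i j
    simp [Matrix.replicateRow, Matrix.replicateCol, Matrix.conjTranspose_apply]
  rw [he]
  exact h

theorem stmt17 {d : ℕ} (hd : 1 ≤ d) (T : ℕ) (lam L : ℝ) (hlam : 0 < lam) (hL : 0 < L)
    (x : ℕ → Fin d → ℝ) (hx : ∀ t, ∑ j, (x t j)^2 ≤ L)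
    (A : ℕ → Matrix (Fin d) (Fin d) ℝ)
    (hA : ∀ t, A t = lam • (1 : Matrix (Fin d) (Fin d) ℝ) +
        ∑ i ∈ Finset.range t, vecMulVec (x i) (x i)) :
    (∑ t ∈ Finset.range T, min 1 (x t ⬝ᵥ (A t)⁻¹.mulVec (x t))
        ≤ 2 * Real.log ((A T).det / lam ^ d)) ∧
      2 * Real.log ((A T).det / lam ^ d) ≤ 2 * d * Real.log (1 + T * L / (d * lam)) := by
  have hd' : (0:ℝ) < d := by exact_mod_cast hd
  -- positive definiteness
  have hsmul : (lam • (1 : Matrix (Fin d) (Fin d) ℝ)).PosDef := by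
    rw [smul_one_eq_diagonal]
    exact Matrix.PosDef.diagonal (fun _ => hlam)
  have hsumPSD : ∀ t : ℕ, (∑ i ∈ Finset.range t, vecMulVec (x i) (x i)).PosSemidef := by
    intro t
    induction t with
    | zero => simpa using Matrix.PosSemidef.zero
    | succ n ih =>
      rw [Finset.sum_range_succ]
      exact ih.add (aux_vecMulVec_posSemidef (x n))
  have hPD : ∀ t, (A t).PosDef := fun t => by
    rw [hA t]; exact hsmul.add_posSemidef (hsumPSD t)
  set u : ℕ → ℝ := fun t => x t ⬝ᵥ (A t)⁻¹.mulVec (x t) with hu_def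
  have hu0 : ∀ t, 0 ≤ u t := by
    intro t
    have := ((hPD t).inv).posSemidef.dotProduct_mulVec_nonneg (x t)
    simpa using this
  -- determinant recursion
  have hdet : ∀ t, (A (t+1)).det = (A t).det * (1 + u t) := by
    intro t
    have hstep : A (t+1) = A t + Matrix.replicateCol Unit (x t) * Matrix.replicateRow Unit (x t) := by
      rw [hA, hA, Finset.sum_range_succ, ← add_assoc, vecMulVec_eq Unit]
    have hUnit : IsUnit (A t).det := (ne_of_gt (hPD t).det_pos).isUnit
    rw [hstep, Matrix.det_add_replicateCol_mul_replicateRow hUnit]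
    congr 1
    rw [Matrix.det_unique]
    simp only [Matrix.add_apply, Matrix.one_apply_eq]
    congr 1
    rw [Matrix.mul_assoc, ← Matrix.replicateCol_mulVec, Matrix.replicateRow_mul_replicateCol_apply]
  have hprod : ∀ t, (A t).det = lam ^ d * ∏ i ∈ Finset.range t, (1 + u i) := by
    intro t
    induction t with
    | zero =>
      simp [hA 0, Matrix.det_smul]
    | succ n ih =>
      rw [hdet n, ih, Finset.prod_range_succ]; ring
  have hlam_pow : (0:ℝ) < lam ^ d := pow_pos hlam d
  have h1u : ∀ i, (0:ℝ) < 1 + u i := fun i => by have := hu0 i; linarith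
  have hlogdet : Real.log ((A T).det / lam ^ d)
      = ∑ i ∈ Finset.range T, Real.log (1 + u i) := by
    rw [hprod T, mul_comm, mul_div_assoc, div_self (ne_of_gt hlam_pow), mul_one]
    exact Real.log_prod (fun i _ => ne_of_gt (h1u i))
  constructor
  · rw [hlogdet, Finset.mul_sum]
    exact Finset.sum_le_sum fun i _ => aux_min_le_two_log (hu0 i)
  · -- second inequality
    have hH : (A T).IsHermitian := (hPD T).isHermitian
    set μ := hH.eigenvalues with hμ
    have hμ0 : ∀ i, 0 ≤ μ i := fun i => (hPD T).posSemidef.eigenvalues_nonneg i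
    have hdet_eq : (A T).det = ∏ i, μ i := by
      have := hH.det_eq_prod_eigenvalues
      simpa using this
    have htr_eq : (A T).trace = ∑ i, μ i := by
      have hst := hH.spectral_theorem
      calc (A T).trace
          = Matrix.trace ((hH.eigenvectorUnitary : Matrix (Fin d) (Fin d) ℝ) *
              Matrix.diagonal (RCLike.ofReal ∘ μ) *
              (star (hH.eigenvectorUnitary : Matrix (Fin d) (Fin d) ℝ))) := by exact congrArg Matrix.trace hst
        _ = Matrix.trace ((star (hH.eigenvectorUnitary : Matrix (Fin d) (Fin d) ℝ) *
              ((hH.eigenvectorUnitary : Matrix (Fin d) (Fin d) ℝ))) *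
              Matrix.diagonal (RCLike.ofReal ∘ μ)) := by
            rw [Matrix.trace_mul_comm, Matrix.mul_assoc]
        _ = ∑ i, μ i := by
            rw [Unitary.coe_star_mul_self, one_mul, Matrix.trace_diagonal]
            simp
    -- trace bound
    have htrace_le : (A T).trace ≤ d * lam + T * L := by
      rw [hA T, Matrix.trace_add, Matrix.trace_smul, Matrix.trace_one, Matrix.trace_sum]
      have h1 : ∀ i : ℕ, Matrix.trace (vecMulVec (x i) (x i)) = ∑ j, (x i j)^2 := by
        intro i
        simp [Matrix.trace, Matrix.diag, vecMulVec, sq]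
      have h2 : ∑ i ∈ Finset.range T, Matrix.trace (vecMulVec (x i) (x i)) ≤ T * L := by
        calc ∑ i ∈ Finset.range T, Matrix.trace (vecMulVec (x i) (x i))
            ≤ ∑ i ∈ Finset.range T, L := Finset.sum_le_sum fun i _ => (h1 i) ▸ hx i
          _ = T * L := by simp [mul_comm]
        
      have : (lam • Matrix.trace (1 : Matrix (Fin d) (Fin d) ℝ)) = lam * d := by
        simp [Matrix.trace_one, mul_comm]
      simp only [smul_eq_mul] at *
      rw [Fintype.card_fin] at *
      nlinarith [h2]
    -- AM-GM
    have hamgm : (A T).det ≤ ((A T).trace / d) ^ d := by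
      have hgm := Real.geom_mean_le_arith_mean_weighted Finset.univ
        (fun _ : Fin d => 1 / (d:ℝ)) μ (fun i _ => by positivity)
        (by simp [Finset.card_univ]; field_simp) (fun i _ => hμ0 i)
      have hgm0 : 0 ≤ ∏ i : Fin d, μ i ^ ((1:ℝ)/d) :=
        Finset.prod_nonneg fun i _ => Real.rpow_nonneg (hμ0 i) _
      have hpow : (∏ i : Fin d, μ i ^ ((1:ℝ)/d)) ^ d = ∏ i, μ i := by
        rw [← Finset.prod_pow]
        refine Finset.prod_congr rfl fun i _ => ?_
        rw [← Real.rpow_natCast (μ i ^ ((1:ℝ)/d)) d, ← Real.rpow_mul (hμ0 i)]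
        rw [one_div, inv_mul_cancel₀ (ne_of_gt hd'), Real.rpow_one]
      have := pow_le_pow_left₀ hgm0 hgm d
      rw [hpow] at this
      rw [hdet_eq, htr_eq]
      calc ∏ i, μ i ≤ (∑ i : Fin d, 1/(d:ℝ) * μ i) ^ d := this
        _ = ((∑ i, μ i) / d) ^ d := by
            congr 1
            rw [← Finset.mul_sum]; ring
    have hbase : (A T).trace / d ≤ lam * (1 + T * L / (d * lam)) := by
      rw [div_le_iff₀ hd']
      have : lam * (1 + T * L / (d * lam)) * d = d * lam + T * L := by
        field_simp
      rw [this]; exact htrace_le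
    have hfinal : (A T).det / lam ^ d ≤ (1 + T * L / (d * lam)) ^ d := by
      rw [div_le_iff₀ hlam_pow]
      calc (A T).det ≤ ((A T).trace / d) ^ d := hamgm
        _ ≤ (lam * (1 + T * L / (d * lam))) ^ d := by
            apply pow_le_pow_left₀ _ hbase
            have : 0 ≤ (A T).trace := by
              rw [htr_eq]; exact Finset.sum_nonneg fun i _ => hμ0 i
            positivity
        _ = (1 + T * L / (d * lam)) ^ d * lam ^ d := by rw [mul_pow]; ring
    have hdpos : (0:ℝ) < (A T).det / lam ^ d := div_pos (hPD T).det_pos hlam_pow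
    have := Real.log_le_log hdpos hfinal
    rw [Real.log_pow] at this
    calc 2 * Real.log ((A T).det / lam ^ d)
        ≤ 2 * (d * Real.log (1 + T * L / (d * lam))) := by linarith
      _ = 2 * d * Real.log (1 + T * L / (d * lam)) := by ring
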